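/- Let g : ℝ → M_n(ℂ) be a twice differentiable matrix-valued function with g(t) invertible for all t, and let X : ℝ → M_n(ℂ) be twice differentiable. Suppose A(t) := g(t)·X(t)·g(t)⁻¹ satisfies A''(t) = 0 for all t (free motion). Define M(t) = g(t)⁻¹·g'(t) and L(t) = X'(t) + [M(t), X(t)]. Then A'(t) = g(t)·L(t)·g(t)⁻¹ and L'(t) = [L(t), M(t)] for all t; i.e. (L, M) is a Lax pair for the geodesic flow. -/

import Mathlib

open Matrix

attribute [local instance] Matrix.normedAddCommGroup Matrix.normedSpace


variable {n : ℕ}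

noncomputable def mulCLM (n : ℕ) :
    Matrix (Fin n) (Fin n) ℂ →L[ℝ] Matrix (Fin n) (Fin n) ℂ →L[ℝ] Matrix (Fin n) (Fin n) ℂ :=
  LinearMap.toContinuousLinearMap <|
    { toFun := fun A => LinearMap.toContinuousLinearMap (LinearMap.mul ℝ (Matrix (Fin n) (Fin n) ℂ) A)
      map_add' := by intro x y; ext z; simp [add_mul]
      map_smul' := by intro c x; ext z; simp [smul_mul_assoc] }

theorem HasDerivAt.matmul {f h : ℝ → Matrix (Fin n) (Fin n) ℂ} {f' h' : Matrix (Fin n) (Fin n) ℂ}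
    {t : ℝ} (hf : HasDerivAt f f' t) (hh : HasDerivAt h h' t) :
    HasDerivAt (fun s => f s * h s) (f' * h t + f t * h') t := by
  have key : ∀ i j, HasDerivAt (fun s => (f s * h s) i j) ((f' * h t + f t * h') i j) t := by
    intro i j
    simp only [Matrix.add_apply, Matrix.mul_apply, ← Finset.sum_add_distrib]
    apply HasDerivAt.fun_sum
    intro k _
    have hf1 : HasDerivAt (fun s => f s i k) (f' i k) t := hasDerivAt_pi.1 (hasDerivAt_pi.1 hf i) k
    have hh1 : HasDerivAt (fun s => h s k j) (h' k j) t := hasDerivAt_pi.1 (hasDerivAt_pi.1 hh k) j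
    exact hf1.mul hh1
  exact hasDerivAt_pi.2 fun i => hasDerivAt_pi.2 fun j => key i j

theorem Differentiable.matmul {f h : ℝ → Matrix (Fin n) (Fin n) ℂ}
    (hf : Differentiable ℝ f) (hh : Differentiable ℝ h) :
    Differentiable ℝ (fun s => f s * h s) :=
  fun t => (((hf t).hasDerivAt).matmul ((hh t).hasDerivAt)).differentiableAt

noncomputable def entryCLM (n : ℕ) (i j : Fin n) : Matrix (Fin n) (Fin n) ℂ →L[ℝ] ℂ :=
  LinearMap.toContinuousLinearMap
    { toFun := fun A => A i j, map_add' := fun _ _ => rfl, map_smul' := fun _ _ => rfl }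

theorem Differentiable.matEntry {f : ℝ → Matrix (Fin n) (Fin n) ℂ} (hf : Differentiable ℝ f)
    (i j : Fin n) : Differentiable ℝ (fun t => f t i j) :=
  ((entryCLM n i j).differentiable).comp hf

theorem differentiable_of_entries {f : ℝ → Matrix (Fin n) (Fin n) ℂ}
    (h : ∀ i j, Differentiable ℝ fun t => f t i j) : Differentiable ℝ f := by
  have e : f = fun t => ∑ i, ∑ j, f t i j • single i j (1 : ℂ) := by
    funext t
    conv_lhs => rw [matrix_eq_sum_single (f t)]
    simp [smul_single, smul_eq_mul]
  rw [e]
  apply Differentiable.fun_sum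
  intro i _
  apply Differentiable.fun_sum
  intro j _
  exact (h i j).smul_const _

theorem differentiable_det {f : ℝ → Matrix (Fin n) (Fin n) ℂ}
    (h : ∀ i j, Differentiable ℝ fun t => f t i j) :
    Differentiable ℝ fun t => (f t).det := by
  simp only [Matrix.det_apply']
  apply Differentiable.fun_sum
  intro σ _
  apply Differentiable.const_mul
  apply Differentiable.fun_finset_prod
  intro i _
  exact h _ _

theorem differentiable_gInv {g gInv : ℝ → Matrix (Fin n) (Fin n) ℂ}
    (hg : Differentiable ℝ g) (hInv : ∀ t, g t * gInv t = 1 ∧ gInv t * g t = 1) :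
    Differentiable ℝ gInv := by
  have hdet : Differentiable ℝ fun t => (g t).det := differentiable_det fun i j => hg.matEntry i j
  have hdet0 : ∀ t, (g t).det ≠ 0 := by
    intro t h0
    have : (g t).det * (gInv t).det = 1 := by rw [← det_mul, (hInv t).1, det_one]
    rw [h0, zero_mul] at this
    exact zero_ne_one this
  have hginv_eq : gInv = fun t => ((g t).det)⁻¹ • (g t).adjugate := by
    funext t
    have hu : IsUnit ((g t).det) := isUnit_iff_ne_zero.2 (hdet0 t)
    have : (g t)⁻¹ = ((g t).det)⁻¹ • (g t).adjugate := by
      rw [Matrix.inv_def, Ring.inverse_eq_inv']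
    rw [← this]
    exact (inv_eq_right_inv (hInv t).1).symm
  rw [hginv_eq]
  apply Differentiable.fun_smul
  · exact hdet.inv hdet0  -- maybe name is Differentiable.inv
  · apply differentiable_of_entries
    intro i j
    have : (fun t => (g t).adjugate i j) = fun t => ((g t).updateRow j (Pi.single i 1)).det := by
      funext t; rw [adjugate_apply]
    rw [this]
    apply differentiable_det
    intro k l
    by_cases hk : k = j
    · subst hk; simp only [updateRow_apply, if_pos rfl]
      exact differentiable_const _
    · simp only [updateRow_apply, if_neg hk]
      exact hg.matEntry k l

/-- Lax pair from free motion: if `A(t) = g(t)X(t)g(t)⁻¹` satisfies `A'' = 0`,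
then with `M = g⁻¹g'` and `L = X' + [M,X]` one has `A' = gLg⁻¹` and
`L' = [L,M]`. -/
theorem lax_pair_of_free_motion
    (n : ℕ) (g gInv X : ℝ → Matrix (Fin n) (Fin n) ℂ)
    (hg : Differentiable ℝ g) (hg' : Differentiable ℝ (deriv g))
    (hX : Differentiable ℝ X) (hX' : Differentiable ℝ (deriv X))
    (hInv : ∀ t, g t * gInv t = 1 ∧ gInv t * g t = 1)
    (hfree : ∀ t, deriv (deriv (fun s => g s * X s * gInv s)) t = 0) :
    ∀ t : ℝ,
      deriv (fun s => g s * X s * gInv s) t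
        = g t * (deriv X t + (gInv t * deriv g t * X t - X t * (gInv t * deriv g t)))
            * gInv t ∧
      deriv (fun s => deriv X s +
          (gInv s * deriv g s * X s - X s * (gInv s * deriv g s))) t
        = (deriv X t + (gInv t * deriv g t * X t - X t * (gInv t * deriv g t)))
            * (gInv t * deriv g t)
          - (gInv t * deriv g t)
            * (deriv X t + (gInv t * deriv g t * X t - X t * (gInv t * deriv g t))) := by
  -- abbreviations
  have hgi : Differentiable ℝ gInv := differentiable_gInv hg hInv
  have ga : ∀ t (z : Matrix (Fin n) (Fin n) ℂ), g t * (gInv t * z) = z := fun t z => by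
    rw [← mul_assoc, (hInv t).1, one_mul]
  have ia : ∀ t (z : Matrix (Fin n) (Fin n) ℂ), gInv t * (g t * z) = z := fun t z => by
    rw [← mul_assoc, (hInv t).2, one_mul]
  -- derivative of gInv
  have hDi : ∀ t, HasDerivAt gInv (-(gInv t * deriv g t * gInv t)) t := by
    intro t
    have h1 : HasDerivAt (fun s => gInv s * g s) (deriv gInv t * g t + gInv t * deriv g t) t :=
      ((hgi t).hasDerivAt).matmul ((hg t).hasDerivAt)
    have h2 : HasDerivAt (fun s => gInv s * g s) 0 t := by
      have e : (fun s => gInv s * g s) = fun _ => (1 : Matrix (Fin n) (Fin n) ℂ) :=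
        funext fun s => (hInv s).2
      rw [e]; exact hasDerivAt_const t 1
    have e0 : deriv gInv t * g t + gInv t * deriv g t = 0 := h1.unique h2
    have e1 : deriv gInv t = -(gInv t * deriv g t * gInv t) := by
      have e2 : deriv gInv t * g t = -(gInv t * deriv g t) := by
        rw [eq_neg_iff_add_eq_zero]; exact e0
      calc deriv gInv t = deriv gInv t * (g t * gInv t) := by rw [(hInv t).1, mul_one]
        _ = (deriv gInv t * g t) * gInv t := by rw [mul_assoc]
        _ = -(gInv t * deriv g t) * gInv t := by rw [e2]
        _ = -(gInv t * deriv g t * gInv t) := by rw [neg_mul]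
    rw [← e1]; exact (hgi t).hasDerivAt
  -- derivative of A
  have hA : ∀ t, HasDerivAt (fun s => g s * X s * gInv s)
      ((deriv g t * X t + g t * deriv X t) * gInv t
        + (g t * X t) * -(gInv t * deriv g t * gInv t)) t := by
    intro t
    exact (((hg t).hasDerivAt).matmul ((hX t).hasDerivAt)).matmul (hDi t)
  -- first conclusion, for all t
  have key1 : ∀ t, deriv (fun s => g s * X s * gInv s) t
      = g t * (deriv X t + (gInv t * deriv g t * X t - X t * (gInv t * deriv g t)))
          * gInv t := by
    intro t
    rw [show deriv (fun s => g s * X s * gInv s) t = _ from (hA t).deriv]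
    simp only [mul_add, add_mul, mul_sub, sub_mul, mul_neg, neg_mul, mul_assoc, ga, ia]
    abel
  -- L function
  set L : ℝ → Matrix (Fin n) (Fin n) ℂ :=
    fun s => deriv X s + (gInv s * deriv g s * X s - X s * (gInv s * deriv g s)) with hLdef
  have hLdiff : Differentiable ℝ L := by
    apply hX'.add
    exact ((hgi.matmul hg').matmul hX).sub (hX.matmul (hgi.matmul hg'))
  -- deriv A as a function
  have hA'eq : deriv (fun s => g s * X s * gInv s) = fun s => g s * L s * gInv s :=
    funext fun t => key1 t
  have hA'diff : Differentiable ℝ (deriv (fun s => g s * X s * gInv s)) := by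
    rw [hA'eq]; exact (hg.matmul hLdiff).matmul hgi
  have hA'' : ∀ t, HasDerivAt (deriv (fun s => g s * X s * gInv s)) 0 t := by
    intro t
    have := (hA'diff t).hasDerivAt
    exact this.congr_deriv (hfree t)
  -- L as conjugation of deriv A
  have hLrepr : L = fun s => gInv s * deriv (fun u => g u * X u * gInv u) s * g s := by
    funext t
    rw [key1 t]
    simp only [mul_assoc, ia, ga, (hInv t).2, mul_one]
    simp [hLdef, mul_assoc]
  intro t
  refine ⟨key1 t, ?_⟩
  -- derivative of L
  have hL : HasDerivAt L
      ((-(gInv t * deriv g t * gInv t) * deriv (fun u => g u * X u * gInv u) t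
          + gInv t * 0) * g t
        + (gInv t * deriv (fun u => g u * X u * gInv u) t) * deriv g t) t := by
    rw [hLrepr]
    exact (((hDi t).matmul (hA'' t)).matmul ((hg t).hasDerivAt))
  rw [show deriv L t = _ from hL.deriv]
  rw [key1 t]
  simp only [mul_zero, add_zero, zero_mul, mul_assoc, neg_mul, mul_neg, ia, ga,
    (hInv t).1, (hInv t).2, mul_one, one_mul]
  abel
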